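/- For all natural numbers N and M with 3 ≤ N < M, one has π²·(3 + tan²(π/N))/(24·N·tan(π/N)) > π²·(3 + tan²(π/M))/(24·M·tan(π/M)). (Equivalently, since the paper proves T(P_N) = −E_N/2, the torsion energy T(P_N) of the regular N-gon of area π is strictly increasing in N.) -/

import Mathlib

open Real Set

noncomputable def phiF (s : ℝ) : ℝ :=
  2 * Real.sin s + Real.sin s * Real.cos s - s - 2 * s * Real.cos s

noncomputable def hF (s : ℝ) : ℝ := s * (2 + Real.cos s) / Real.sin s

lemma phiF_hasDeriv (s : ℝ) :
    HasDerivAt phiF (2 * Real.sin s * (s - Real.sin s)) s := by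
  have h1 : HasDerivAt (fun s : ℝ => 2 * Real.sin s) (2 * Real.cos s) s :=
    (Real.hasDerivAt_sin s).const_mul 2
  have h2 : HasDerivAt (fun s : ℝ => Real.sin s * Real.cos s)
      (Real.cos s * Real.cos s + Real.sin s * (-Real.sin s)) s :=
    (Real.hasDerivAt_sin s).mul (Real.hasDerivAt_cos s)
  have h3 : HasDerivAt (fun s : ℝ => s) 1 s := hasDerivAt_id s
  have h4 : HasDerivAt (fun s : ℝ => 2 * s * Real.cos s)
      (2 * 1 * Real.cos s + 2 * s * (-Real.sin s)) s :=
    ((hasDerivAt_id s).const_mul 2).mul (Real.hasDerivAt_cos s)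
  have := ((h1.add h2).sub h3).sub h4
  refine this.congr_deriv ?_
  nlinarith [Real.sin_sq_add_cos_sq s]

lemma phiF_pos {s : ℝ} (hs0 : 0 < s) (hsπ : s < π) : 0 < phiF s := by
  have hmono : StrictMonoOn phiF (Icc 0 π) := by
    apply strictMonoOn_of_deriv_pos (convex_Icc 0 π)
    · exact fun x _ => ((phiF_hasDeriv x).continuousAt).continuousWithinAt
    · intro x hx
      rw [interior_Icc] at hx
      rw [(phiF_hasDeriv x).deriv]
      have hsin : 0 < Real.sin x := Real.sin_pos_of_pos_of_lt_pi hx.1 hx.2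
      have hlt : Real.sin x < x := Real.sin_lt hx.1
      nlinarith [mul_pos hsin (sub_pos.2 hlt)]
  have : phiF 0 < phiF s := by
    apply hmono (by simp [Real.pi_pos.le]) ⟨hs0.le, hsπ.le⟩ hs0
  simpa [phiF] using this

lemma hF_strictMono : StrictMonoOn hF (Ioo 0 π) := by
  apply strictMonoOn_of_deriv_pos (convex_Ioo 0 π)
  · intro x hx
    have hsin : Real.sin x ≠ 0 :=
      (Real.sin_pos_of_pos_of_lt_pi hx.1 hx.2).ne'
    exact (ContinuousAt.div (by fun_prop) (Real.continuous_sin.continuousAt) hsin).continuousWithinAt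
  · intro x hx
    rw [interior_Ioo] at hx
    have hsin : 0 < Real.sin x := Real.sin_pos_of_pos_of_lt_pi hx.1 hx.2
    have hnum : HasDerivAt (fun s : ℝ => s * (2 + Real.cos s))
        ((2 + Real.cos x) - x * Real.sin x) x := by
      have := (hasDerivAt_id x).mul ((hasDerivAt_const x (2:ℝ)).add (Real.hasDerivAt_cos x))
      refine this.congr_deriv ?_
      simp only [id_eq, Pi.add_apply]
      ring
    have hd : HasDerivAt hF
        ((((2 + Real.cos x) - x * Real.sin x) * Real.sin x -
          x * (2 + Real.cos x) * Real.cos x) / Real.sin x ^ 2) x :=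
      hnum.div (Real.hasDerivAt_sin x) hsin.ne'
    rw [hd.deriv]
    have hφ : 0 < phiF x := phiF_pos hx.1 hx.2
    have hkey : ((2 + Real.cos x) - x * Real.sin x) * Real.sin x -
        x * (2 + Real.cos x) * Real.cos x = phiF x := by
      unfold phiF
      linear_combination (-x) * Real.sin_sq_add_cos_sq x
    rw [hkey]
    positivity

lemma expr_eq (n : ℕ) (hn : 3 ≤ n) :
    π ^ 2 * (3 + Real.tan (π / n) ^ 2) / (24 * n * Real.tan (π / n)) =
      (π / 24) * hF (2 * (π / n)) := by
  have hπ := Real.pi_pos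
  have hn0 : (0:ℝ) < n := by positivity
  set t := π / n with ht
  have ht0 : 0 < t := by positivity
  have htlt : t < π / 2 := by
    rw [ht, div_lt_div_iff₀ hn0 two_pos]
    have h2n : (2:ℝ) < n := by exact_mod_cast (by omega : 2 < n)
    nlinarith
  have hcos : 0 < Real.cos t := Real.cos_pos_of_mem_Ioo ⟨by linarith, htlt⟩
  have hsin : 0 < Real.sin t := Real.sin_pos_of_pos_of_lt_pi ht0 (by linarith)
  have hsin2 : Real.sin (2 * t) = 2 * Real.sin t * Real.cos t := Real.sin_two_mul t
  have hcos2 : Real.cos (2 * t) = 2 * Real.cos t ^ 2 - 1 := Real.cos_two_mul t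
  have hncast : (n : ℝ) = π / t := by
    rw [ht]; field_simp
  rw [hF, Real.tan_eq_sin_div_cos, hncast, hsin2, hcos2]
  have hsin2pos : (0:ℝ) < 2 * Real.sin t * Real.cos t := by positivity
  field_simp
  linear_combination Real.sin_sq_add_cos_sq t

/-- The quantity `E_N = π²(3 + tan²(π/N)) / (24 N tan(π/N))`, whose negative half is the
torsion energy `T(P_N)` of the regular `N`-gon of area `π`, is strictly decreasing in `N`;
equivalently `T(P_N)` is strictly increasing in `N`. -/
theorem stmt_0 (N M : ℕ) (hN : 3 ≤ N) (hNM : N < M) :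
    π ^ 2 * (3 + tan (π / N) ^ 2) / (24 * N * tan (π / N)) >
      π ^ 2 * (3 + tan (π / M) ^ 2) / (24 * M * tan (π / M)) := by
  have hπ := Real.pi_pos
  have hM : 3 ≤ M := le_of_lt (lt_of_le_of_lt hN hNM)
  rw [expr_eq N hN, expr_eq M hM]
  have hN0 : (0:ℝ) < N := by positivity
  have hM0 : (0:ℝ) < M := by positivity
  have hNM' : (N:ℝ) < M := by exact_mod_cast hNM
  have h3N : (3:ℝ) ≤ N := by exact_mod_cast hN
  have hx : 2 * (π / M) ∈ Ioo (0:ℝ) π := by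
    constructor
    · positivity
    · rw [mul_div_assoc', div_lt_iff₀ hM0]; nlinarith
  have hy : 2 * (π / N) ∈ Ioo (0:ℝ) π := by
    constructor
    · positivity
    · rw [mul_div_assoc', div_lt_iff₀ hN0]; nlinarith
  have hxy : 2 * (π / M) < 2 * (π / N) := by
    have : π / M < π / N := div_lt_div_of_pos_left hπ hN0 hNM'
    linarith
  exact mul_lt_mul_of_pos_left (hF_strictMono hx hy hxy) (by positivity)
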